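/- Every separable state ω of a bipartite system (𝔄, 𝔅 ⊆ 𝔐) satisfies the Bell–CHSH inequality β(ω) ≤ 1. -/

import Mathlib

open scoped ComplexOrder

section BellCHSH

universe u

variable {M : Type u} [NormedRing M] [StarRing M] [CStarRing M] [NormedAlgebra ℂ M]
    [StarModule ℂ M] [CompleteSpace M]

/-- A state on a unital C*-algebra: a normalized positive linear functional. -/
def IsStateOn (ω : M →ₗ[ℂ] ℂ) : Prop :=
  ω 1 = 1 ∧ ∀ a : M, 0 ≤ ω (star a * a)

/-- A product state for the bipartite system `(𝔄, 𝔅 ⊆ M)`: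
a state with `ω(AB) = ω(A)ω(B)` for `A ∈ 𝔄`, `B ∈ 𝔅`. -/
def IsProductStateOn (𝔄 𝔅 : StarSubalgebra ℂ M) (ω : M →ₗ[ℂ] ℂ) : Prop :=
  IsStateOn ω ∧ ∀ a ∈ 𝔄, ∀ b ∈ 𝔅, ω (a * b) = ω a * ω b

/-- A convex combination of product states. -/
def IsConvexCombOfProductStates (𝔄 𝔅 : StarSubalgebra ℂ M) (φ : M →ₗ[ℂ] ℂ) : Prop :=
  ∃ (n : ℕ) (t : Fin n → ℝ) (ψ : Fin n → (M →ₗ[ℂ] ℂ)),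
    (∀ i, 0 ≤ t i) ∧ (∑ i, t i) = 1 ∧ (∀ i, IsProductStateOn 𝔄 𝔅 (ψ i)) ∧
    φ = ∑ i, (t i : ℂ) • ψ i

/-- A separable state: an element of the weak-* closed convex hull of the product states,
i.e. a pointwise (weak-*) limit of a net of convex combinations of product states. -/
def IsSeparableState (𝔄 𝔅 : StarSubalgebra ℂ M) (ω : M →ₗ[ℂ] ℂ) : Prop :=
  IsStateOn ω ∧ ∃ (ι : Type u) (l : Filter ι), l.NeBot ∧ ∃ σ : ι → (M →ₗ[ℂ] ℂ),
    (∀ i, IsConvexCombOfProductStates 𝔄 𝔅 (σ i)) ∧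
    ∀ a : M, Filter.Tendsto (fun i => σ i a) l (nhds (ω a))

lemma state_nonneg [PartialOrder M] [StarOrderedRing M] {ω : M →ₗ[ℂ] ℂ}
    (h : IsStateOn ω) {x : M} (hx : 0 ≤ x) : 0 ≤ ω x := by
  rw [StarOrderedRing.nonneg_iff] at hx
  induction hx using AddSubmonoid.closure_induction with
  | mem y hy => obtain ⟨s, rfl⟩ := hy; exact h.2 s
  | zero => simp
  | add a b _ _ ha hb => rw [map_add]; exact add_nonneg ha hb

lemma state_val [PartialOrder M] [StarOrderedRing M] {ω : M →ₗ[ℂ] ℂ}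
    (h : IsStateOn ω) {x : M} (hx : -1 ≤ x ∧ x ≤ 1) :
    (ω x).im = 0 ∧ -1 ≤ (ω x).re ∧ (ω x).re ≤ 1 := by
  have h1 : 0 ≤ ω (1 - x) := state_nonneg h (by simpa using hx.2)
  have h2 : 0 ≤ ω (x + 1) := state_nonneg h (by simpa [sub_neg_eq_add] using sub_nonneg.2 hx.1)
  rw [map_sub, h.1] at h1
  rw [map_add, h.1] at h2
  rw [Complex.le_def] at h1 h2
  simp only [Complex.sub_re, Complex.sub_im, Complex.add_re, Complex.add_im,
    Complex.one_re, Complex.one_im, Complex.zero_re, Complex.zero_im] at h1 h2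
  refine ⟨by linarith [h1.2], by linarith [h2.1], by linarith [h1.1]⟩

lemma chsh_real {a₁ a₂ b₁ b₂ : ℝ} (ha₁ : -1 ≤ a₁ ∧ a₁ ≤ 1) (ha₂ : -1 ≤ a₂ ∧ a₂ ≤ 1)
    (hb₁ : -1 ≤ b₁ ∧ b₁ ≤ 1) (hb₂ : -1 ≤ b₂ ∧ b₂ ≤ 1) :
    a₁ * b₁ + a₁ * b₂ + a₂ * b₁ - a₂ * b₂ ≤ 2 := by
  nlinarith [mul_nonneg (by linarith : (0:ℝ) ≤ 1 - a₁) (by linarith : (0:ℝ) ≤ 1 - b₁),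
    mul_nonneg (by linarith : (0:ℝ) ≤ 1 + a₁) (by linarith : (0:ℝ) ≤ 1 + b₁),
    mul_nonneg (by linarith : (0:ℝ) ≤ 1 - a₂) (by linarith : (0:ℝ) ≤ 1 - b₂),
    mul_nonneg (by linarith : (0:ℝ) ≤ 1 + a₂) (by linarith : (0:ℝ) ≤ 1 + b₂),
    mul_nonneg (by linarith : (0:ℝ) ≤ 1 - a₁) (by linarith : (0:ℝ) ≤ 1 + b₂),
    mul_nonneg (by linarith : (0:ℝ) ≤ 1 + a₁) (by linarith : (0:ℝ) ≤ 1 - b₂),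
    mul_nonneg (by linarith : (0:ℝ) ≤ 1 - a₂) (by linarith : (0:ℝ) ≤ 1 + b₁),
    mul_nonneg (by linarith : (0:ℝ) ≤ 1 + a₂) (by linarith : (0:ℝ) ≤ 1 - b₁)]

/-- Every separable state `ω` of a bipartite system `(𝔄, 𝔅 ⊆ M)` satisfies the
Bell–CHSH inequality `β(ω) ≤ 1`, i.e. `(1/2) ω(A₁(B₁+B₂) + A₂(B₁−B₂)) ≤ 1` for all
self-adjoint contractions `A₁, A₂ ∈ 𝔄`, `B₁, B₂ ∈ 𝔅`. -/
theorem stmt6 [PartialOrder M] [StarOrderedRing M]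
    (𝔄 𝔅 : StarSubalgebra ℂ M)
    (hcomm : ∀ a ∈ 𝔄, ∀ b ∈ 𝔅, a * b = b * a)
    (ω : M →ₗ[ℂ] ℂ) (hsep : IsSeparableState 𝔄 𝔅 ω)
    (A₁ A₂ B₁ B₂ : M)
    (hA₁ : A₁ ∈ 𝔄) (hA₂ : A₂ ∈ 𝔄) (hB₁ : B₁ ∈ 𝔅) (hB₂ : B₂ ∈ 𝔅)
    (hA₁sa : IsSelfAdjoint A₁) (hA₂sa : IsSelfAdjoint A₂)
    (hB₁sa : IsSelfAdjoint B₁) (hB₂sa : IsSelfAdjoint B₂)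
    (hA₁le : -1 ≤ A₁ ∧ A₁ ≤ 1) (hA₂le : -1 ≤ A₂ ∧ A₂ ≤ 1)
    (hB₁le : -1 ≤ B₁ ∧ B₁ ≤ 1) (hB₂le : -1 ≤ B₂ ∧ B₂ ≤ 1) :
    (1 / 2 : ℝ) * (ω (A₁ * (B₁ + B₂) + A₂ * (B₁ - B₂))).re ≤ 1 := by
  set X : M := A₁ * (B₁ + B₂) + A₂ * (B₁ - B₂) with hX
  -- Step 1: bound for product states
  have hprod : ∀ ψ : M →ₗ[ℂ] ℂ, IsProductStateOn 𝔄 𝔅 ψ → (ψ X).re ≤ 2 := by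
    intro ψ hψ
    obtain ⟨hst, hfac⟩ := hψ
    have e1 := hfac A₁ hA₁ B₁ hB₁
    have e2 := hfac A₁ hA₁ B₂ hB₂
    have e3 := hfac A₂ hA₂ B₁ hB₁
    have e4 := hfac A₂ hA₂ B₂ hB₂
    have hv1 := state_val hst hA₁le
    have hv2 := state_val hst hA₂le
    have hv3 := state_val hst hB₁le
    have hv4 := state_val hst hB₂le
    have hXeq : X = A₁ * B₁ + A₁ * B₂ + (A₂ * B₁ - A₂ * B₂) := by rw [hX, mul_add, mul_sub]
    have hXval : ψ X = ψ A₁ * ψ B₁ + ψ A₁ * ψ B₂ + ψ A₂ * ψ B₁ - ψ A₂ * ψ B₂ := by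
      rw [hXeq, map_add, map_add, map_sub, e1, e2, e3, e4]; ring
    have : (ψ X).re = (ψ A₁).re * (ψ B₁).re + (ψ A₁).re * (ψ B₂).re
        + (ψ A₂).re * (ψ B₁).re - (ψ A₂).re * (ψ B₂).re := by
      rw [hXval]
      simp [Complex.add_re, Complex.sub_re, Complex.mul_re, hv1.1, hv2.1, hv3.1, hv4.1]
    rw [this]
    exact chsh_real ⟨hv1.2.1, hv1.2.2⟩ ⟨hv2.2.1, hv2.2.2⟩ ⟨hv3.2.1, hv3.2.2⟩ ⟨hv4.2.1, hv4.2.2⟩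
  -- Step 2: bound for convex combinations
  have hconv : ∀ φ : M →ₗ[ℂ] ℂ, IsConvexCombOfProductStates 𝔄 𝔅 φ → (φ X).re ≤ 2 := by
    intro φ hφ
    obtain ⟨n, t, ψ, ht0, ht1, hψ, rfl⟩ := hφ
    have : ((∑ i, (t i : ℂ) • ψ i) X).re = ∑ i, t i * (ψ i X).re := by
      simp [LinearMap.sum_apply, Complex.re_sum, Complex.mul_re]
    rw [this]
    calc ∑ i, t i * (ψ i X).re ≤ ∑ i, t i * 2 :=
          Finset.sum_le_sum fun i _ => mul_le_mul_of_nonneg_left (hprod _ (hψ i)) (ht0 i)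
      _ = 2 := by rw [← Finset.sum_mul, ht1]; ring
  -- Step 3: limit
  obtain ⟨hst, ι, l, hne, σ, hσ, hlim⟩ := hsep
  have hωX : (ω X).re ≤ 2 := by
    have htend : Filter.Tendsto (fun i => (σ i X).re) l (nhds (ω X).re) :=
      (Complex.continuous_re.tendsto _).comp (hlim X)
    exact le_of_tendsto htend (Filter.Eventually.of_forall fun i => hconv _ (hσ i))
  linarith
end BellCHSH
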